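/- Fix reals a ≥ 0, g ≥ 0, σ² > 0, P_R > 0, P_Δ > 0, β > 0, Ω > 0, and set j_0 = a + P_R·g + σ², j_1 = a + (P_R + P_Δ)·g + σ². Define P_E : ℝ → ℝ by P_E(τ) = 1 for τ < j_0, P_E(τ) = exp((j_0 − τ)/(β·P_R·Ω)) for j_0 ≤ τ < j_1, and P_E(τ) = 1 + exp((j_0 − τ)/(β·P_R·Ω)) − exp((j_1 − τ)/(β·(P_R + P_Δ)·Ω)) for τ ≥ j_1. Define τ_0 = −(β·P_R·(P_R + P_Δ)·Ω/P_Δ)·ln(P_R/(P_R + P_Δ)) + a + σ², and let τ* = j_1 if j_1 ≥ τ_0 and τ* = τ_0 otherwise. Then τ* is a global minimizer of P_E, i.e. P_E(τ*) ≤ P_E(τ) for every real τ. -/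

import Mathlib

open Real

private lemma exp_mul_le' (r w : ℝ) (h0 : 0 ≤ r) (h1 : r ≤ 1) :
    Real.exp (r * w) ≤ 1 + r * (Real.exp w - 1) := by
  have h := convexOn_exp.2 (Set.mem_univ w) (Set.mem_univ 0) h0
    (sub_nonneg.mpr h1) (by ring)
  simp only [smul_eq_mul, mul_zero, add_zero, Real.exp_zero, mul_one] at h
  linarith


set_option maxHeartbeats 1000000

/-- **Theorem 3: optimal detection threshold.** With
`j₀ = a + P_R·g + σ²`, `j₁ = a + (P_R+P_Δ)·g + σ²`, the piecewise detection error
probability `P_E`, and `τ₀ = −(β·P_R·(P_R+P_Δ)·Ω/P_Δ)·ln(P_R/(P_R+P_Δ)) + a + σ²`,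
the threshold `τ* = j₁` if `j₁ ≥ τ₀` and `τ* = τ₀` otherwise is a global minimizer
of `P_E`. -/
theorem optimal_detection_threshold
    (a g σ2 P_R P_Δ β Ω : ℝ)
    (ha : 0 ≤ a) (hg : 0 ≤ g) (hσ : 0 < σ2)
    (hPR : 0 < P_R) (hPΔ : 0 < P_Δ) (hβ : 0 < β) (hΩ : 0 < Ω)
    (j₀ j₁ τ₀ τstar : ℝ) (P_E : ℝ → ℝ)
    (hj₀ : j₀ = a + P_R * g + σ2)
    (hj₁ : j₁ = a + (P_R + P_Δ) * g + σ2)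
    (hPE : ∀ τ, P_E τ =
      if τ < j₀ then 1
      else if τ < j₁ then exp ((j₀ - τ) / (β * P_R * Ω))
      else 1 + exp ((j₀ - τ) / (β * P_R * Ω))
        - exp ((j₁ - τ) / (β * (P_R + P_Δ) * Ω)))
    (hτ₀ : τ₀ = -(β * P_R * (P_R + P_Δ) * Ω / P_Δ) * Real.log (P_R / (P_R + P_Δ))
        + a + σ2)
    (hτstar : τstar = if j₁ ≥ τ₀ then j₁ else τ₀) :
    ∀ τ : ℝ, P_E τstar ≤ P_E τ := by
  intro τ
  have hPRΔ : 0 < P_R + P_Δ := by linarith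
  obtain ⟨c₁, hc₁⟩ : ∃ x : ℝ, x = β * P_R * Ω := ⟨_, rfl⟩
  obtain ⟨c₂, hc₂⟩ : ∃ x : ℝ, x = β * (P_R + P_Δ) * Ω := ⟨_, rfl⟩
  obtain ⟨r, hr⟩ : ∃ x : ℝ, x = P_R / (P_R + P_Δ) := ⟨_, rfl⟩
  simp only [← hc₁, ← hc₂] at hPE
  rw [← hr] at hτ₀
  have hc₁pos : 0 < c₁ := by rw [hc₁]; positivity
  have hc₂pos : 0 < c₂ := by rw [hc₂]; positivity
  have hrpos : 0 < r := by rw [hr]; exact div_pos hPR hPRΔ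
  have hr1 : r < 1 := by rw [hr]; exact (div_lt_one hPRΔ).mpr (by linarith)
  have hj₀j₁ : j₀ ≤ j₁ := by rw [hj₀, hj₁]; nlinarith
  have hτstar_ge : j₁ ≤ τstar := by
    rw [hτstar]; split_ifs with h
    · exact le_refl _
    · exact le_of_lt (lt_of_not_ge h)
  -- key region-3 inequality
  have key : ∀ t, j₁ ≤ t →
      1 + exp ((j₀ - τstar)/c₁) - exp ((j₁ - τstar)/c₂) ≤
      1 + exp ((j₀ - t)/c₁) - exp ((j₁ - t)/c₂) := by
    intro t ht
    obtain ⟨w, hw⟩ : ∃ x : ℝ, x = (τstar - t) / c₁ := ⟨_, rfl⟩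
    have hu : (j₀ - t)/c₁ = (j₀ - τstar)/c₁ + w := by
      rw [hw, ← add_div]; ring_nf
    have hv : (j₁ - t)/c₂ = (j₁ - τstar)/c₂ + r * w := by
      rw [hw, hr, hc₁, hc₂]
      field_simp
      ring
    rw [hu, hv, Real.exp_add, Real.exp_add]
    have hbern := exp_mul_le' r w hrpos.le hr1.le
    by_cases hcase : τ₀ ≤ j₁
    · -- τstar = j₁
      have hts : τstar = j₁ := by rw [hτstar, if_pos hcase]
      have hw0 : w ≤ 0 := by
        rw [hw, hts]
        exact div_nonpos_of_nonpos_of_nonneg (by linarith) hc₁pos.le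
      have hewle : exp w ≤ 1 := by
        calc exp w ≤ exp 0 := exp_le_exp.mpr hw0
        _ = 1 := exp_zero
      have hA : exp ((j₀ - τstar)/c₁) ≤ r := by
        have h1 : (j₀ - τstar)/c₁ ≤ Real.log r := by
          rw [hts, hj₀, hj₁, hc₁]
          have h2 : (a + (P_R + P_Δ) * g + σ2) ≥ τ₀ := by rw [hj₁] at hcase; linarith
          rw [hτ₀] at h2
          have h3 : -(β * P_R * (P_R + P_Δ) * Ω / P_Δ) * Real.log r ≤ (P_R + P_Δ) * g := by
            linarith
          have h5 : (-(β * P_R * (P_R + P_Δ) * Ω / P_Δ) * Real.log r) * P_Δ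
              = -(β * P_R * (P_R + P_Δ) * Ω * Real.log r) := by
            field_simp
          have h4 : -(β * P_R * (P_R + P_Δ) * Ω * Real.log r) ≤ (P_R + P_Δ) * g * P_Δ := by
            rw [← h5]
            exact mul_le_mul_of_nonneg_right h3 hPΔ.le
          rw [div_le_iff₀ (by positivity : (0:ℝ) < β * P_R * Ω)]
          nlinarith [h4, hPRΔ]
        calc exp ((j₀ - τstar)/c₁) ≤ exp (Real.log r) := exp_le_exp.mpr h1
        _ = r := exp_log hrpos
      have hV : (j₁ - τstar)/c₂ = 0 := by rw [hts]; simp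
      rw [hV, exp_zero]
      have hprod : r * (exp w - 1) ≤ exp ((j₀ - τstar)/c₁) * (exp w - 1) :=
        mul_le_mul_of_nonpos_right hA (by linarith)
      nlinarith [exp_pos ((j₀ - τstar)/c₁), exp_pos w]
    · -- τstar = τ₀
      have hts : τstar = τ₀ := by rw [hτstar, if_neg hcase]
      have hc₁ne : c₁ ≠ 0 := hc₁pos.ne'
      have hc₂ne : c₂ ≠ 0 := hc₂pos.ne'
      have key0 : (j₀ - τstar) * c₂ = Real.log r * (c₁ * c₂) + (j₁ - τstar) * c₁ := by
        rw [hts, hτ₀, hj₀, hj₁, hc₁, hc₂]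
        have hPne : P_Δ ≠ 0 := hPΔ.ne'
        field_simp
        ring
      have hid : (j₀ - τstar)/c₁ = Real.log r + (j₁ - τstar)/c₂ := by
        field_simp
        linear_combination key0
      have hA : exp ((j₀ - τstar)/c₁) = r * exp ((j₁ - τstar)/c₂) := by
        rw [hid, Real.exp_add, Real.exp_log hrpos]
      rw [hA]
      have hB := exp_pos ((j₁ - τstar)/c₂)
      have h6 : exp ((j₁ - τstar)/c₂) * exp (r * w)
          ≤ exp ((j₁ - τstar)/c₂) + r * exp ((j₁ - τstar)/c₂) * exp w
            - r * exp ((j₁ - τstar)/c₂) := by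
        have h7 := mul_le_mul_of_nonneg_left hbern hB.le
        nlinarith [h7]
      linarith [h6]
  -- P_E at τstar
  have hnots0 : ¬ τstar < j₀ := not_lt.mpr (le_trans hj₀j₁ hτstar_ge)
  have hnots1 : ¬ τstar < j₁ := not_lt.mpr hτstar_ge
  have hPEstar : P_E τstar = 1 + exp ((j₀ - τstar)/c₁) - exp ((j₁ - τstar)/c₂) := by
    rw [hPE, if_neg hnots0, if_neg hnots1]
  rw [hPEstar, hPE τ]
  have hkeyj₁ := key j₁ le_rfl
  have hsimp : exp ((j₁ - j₁)/c₂) = 1 := by simp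
  split_ifs with h1 h2
  · -- τ < j₀ : show ≤ 1
    have h3 : exp ((j₀ - j₁)/c₁) ≤ 1 := by
      calc exp ((j₀ - j₁)/c₁) ≤ exp 0 := by
            apply exp_le_exp.mpr
            exact div_nonpos_of_nonpos_of_nonneg (by linarith) hc₁pos.le
      _ = 1 := exp_zero
    linarith
  · -- j₀ ≤ τ < j₁
    have hmono : exp ((j₀ - j₁)/c₁) ≤ exp ((j₀ - τ)/c₁) := by
      apply exp_le_exp.mpr
      exact (div_le_div_iff_of_pos_right hc₁pos).mpr (by linarith)
    linarith
  · exact key τ (not_lt.mp h2)
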